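/- For each nonnegative integer ℓ and n ≥ 0, define ξ_{ℓ,n} := q^{(ℓ+1)n}(−q;q)_n/(−q^{ℓ+2};q)_n. Then the Hankel determinant satisfies det_{0≤i,j≤n}(ξ_{ℓ,i+j}) = (−1)^{binom(n+1,2)} q^{2·binom(n+2,3)+(2ℓ+1)·binom(n+1,2)} · Π_{k=1}^n (q^2;q^2)_k (q^{2ℓ+2};q^2)_k / ((−q^{ℓ+1};q^2)_k (−q^{ℓ+2};q^2)_k (−q^{ℓ+2};q^2)_k (−q^{ℓ+3};q^2)_k). -/

import Mathlib

open Finset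

noncomputable def q : RatFunc ℚ := RatFunc.X

/-- q-Pochhammer `(A;Q)_n`. -/
noncomputable def qPoch (Q A : RatFunc ℚ) (n : ℕ) : RatFunc ℚ :=
  ∏ j ∈ Finset.range n, (1 - A * Q ^ j)

/-- The moment sequence `ξ_{ℓ,n}`. -/
noncomputable def xiSeq (ℓ n : ℕ) : RatFunc ℚ :=
  q ^ ((ℓ + 1) * n) * qPoch q (-q) n / qPoch q (-q ^ (ℓ + 2)) n

lemma q_ne_zero : q ≠ 0 := RatFunc.X_ne_zero

lemma q_pow_ne_zero (k : ℕ) : q ^ k ≠ 0 := pow_ne_zero _ q_ne_zero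

lemma one_add_q_pow_ne_zero (k : ℕ) : (1 : RatFunc ℚ) + q ^ k ≠ 0 := by
  have h : (1 : RatFunc ℚ) + q ^ k =
      algebraMap (Polynomial ℚ) (RatFunc ℚ) (1 + Polynomial.X ^ k) := by
    simp [q, RatFunc.algebraMap_X]
  rw [h]
  intro hc
  have h0 : (1 + Polynomial.X ^ k : Polynomial ℚ) = 0 :=
    RatFunc.algebraMap_injective ℚ (by simpa using hc)
  have := congrArg (Polynomial.eval (0 : ℚ)) h0
  simp at this
  rcases eq_or_ne k 0 with hk | hk
  · simp [hk] at this
  · simp [zero_pow hk] at this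

lemma one_sub_q_pow_ne_zero (k : ℕ) (hk : k ≠ 0) : (1 : RatFunc ℚ) - q ^ k ≠ 0 := by
  have h : (1 : RatFunc ℚ) - q ^ k =
      algebraMap (Polynomial ℚ) (RatFunc ℚ) (1 - Polynomial.X ^ k) := by
    simp [q, RatFunc.algebraMap_X]
  rw [h]
  intro hc
  have h0 : (1 - Polynomial.X ^ k : Polynomial ℚ) = 0 :=
    RatFunc.algebraMap_injective ℚ (by simpa using hc)
  have := congrArg (Polynomial.eval (0 : ℚ)) h0
  simp [zero_pow hk] at this

noncomputable def Pn (t m : ℕ) : RatFunc ℚ := ∏ j ∈ Finset.range m, (1 + q ^ (j + 1 + t))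

noncomputable def Qn (l0 t m : ℕ) : RatFunc ℚ :=
  ∏ j ∈ Finset.range m, (1 + q ^ (j + l0 + 2 * t + 2))

noncomputable def zet (l0 t m : ℕ) : RatFunc ℚ := q ^ ((l0 + t + 1) * m) * Pn t m / Qn l0 t m

noncomputable def rh (l0 t m : ℕ) : RatFunc ℚ :=
  q ^ (l0 + t + 1) * (1 + q ^ (m + 1 + t)) / (1 + q ^ (m + l0 + 2 * t + 2))

noncomputable def Rf (l0 t i : ℕ) : RatFunc ℚ :=
  q ^ (l0 + 2 * t + 2 + i) * (1 - q ^ (l0 + t + 1)) * (q ^ (l0 + t + 1) * (1 + q ^ (1 + t))) /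
    ((1 + q ^ (l0 + 2 * t + 2 + i)) *
      ((1 + q ^ (l0 + 2 * t + 2)) * (1 + q ^ (l0 + 2 * t + 3))) * q ^ i)

noncomputable def Cf (j : ℕ) : RatFunc ℚ := -(1 - q ^ (j + 1)) / q ^ j

lemma Pn_ne_zero (t m : ℕ) : Pn t m ≠ 0 :=
  Finset.prod_ne_zero_iff.2 fun j _ => one_add_q_pow_ne_zero _

lemma Qn_ne_zero (l0 t m : ℕ) : Qn l0 t m ≠ 0 :=
  Finset.prod_ne_zero_iff.2 fun j _ => one_add_q_pow_ne_zero _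

lemma Pn_succ (t m : ℕ) : Pn t (m + 1) = Pn t m * (1 + q ^ (m + 1 + t)) :=
  Finset.prod_range_succ _ _

lemma qpow_congr {a b : ℕ} (h : a = b) : q ^ a = q ^ b := by rw [h]

lemma Pn_succ' (t m : ℕ) : Pn t (m + 1) = (1 + q ^ (1 + t)) * Pn (t + 1) m := by
  rw [Pn, Finset.prod_range_succ']
  rw [show (0 + 1 + t) = 1 + t by omega, mul_comm]
  congr 1
  rw [Pn]
  exact Finset.prod_congr rfl fun j _ => by
    rw [qpow_congr (show j + 1 + 1 + t = j + 1 + (t + 1) by omega)]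

lemma Qn_succ (l0 t m : ℕ) : Qn l0 t (m + 1) = Qn l0 t m * (1 + q ^ (m + l0 + 2 * t + 2)) :=
  Finset.prod_range_succ _ _

lemma Qn_two (l0 t m : ℕ) :
    Qn l0 t (m + 2) = (1 + q ^ (l0 + 2 * t + 2)) * (1 + q ^ (l0 + 2 * t + 3)) * Qn l0 (t + 1) m := by
  rw [Qn, Finset.prod_range_succ', Finset.prod_range_succ']
  rw [Qn]
  have h1 : ∀ j ∈ Finset.range m, (1 + q ^ (j + 1 + 1 + l0 + 2 * t + 2))
      = (1 + q ^ (j + l0 + 2 * (t + 1) + 2)) := fun j _ => by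
    rw [qpow_congr (show j + 1 + 1 + l0 + 2 * t + 2 = j + l0 + 2 * (t + 1) + 2 by omega)]
  rw [Finset.prod_congr rfl h1]
  have e2 : (0 + 1 + l0 + 2 * t + 2) = l0 + 2 * t + 3 := by omega
  have e3 : (0 + l0 + 2 * t + 2) = l0 + 2 * t + 2 := by omega
  rw [e2, e3]
  ring

lemma zet_zero (l0 t : ℕ) : zet l0 t 0 = 1 := by
  simp [zet, Pn, Qn]

lemma zet_succ (l0 t m : ℕ) : zet l0 t (m + 1) = rh l0 t m * zet l0 t m := by
  rw [zet, zet, rh, Pn_succ, Qn_succ]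
  rw [div_mul_div_comm]
  rw [div_eq_div_iff (by exact mul_ne_zero (Qn_ne_zero _ _ _) (one_add_q_pow_ne_zero _))
    (mul_ne_zero (one_add_q_pow_ne_zero _) (Qn_ne_zero _ _ _))]
  ring

-- core identity
set_option maxHeartbeats 2000000 in
lemma core_identity (l0 t i j : ℕ) :
    zet l0 t (i + j + 2) - rh l0 t i * zet l0 t (i + j + 1) =
      Rf l0 t i * Cf j * zet l0 (t + 1) (i + j) := by
  have hP2 : Pn t (i + j + 2) = (1 + q ^ (1 + t)) * (Pn (t + 1) (i + j) * (1 + q ^ (i + j + 1 + (t+1)))) := by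
    rw [Pn_succ', Pn_succ]
  have hP1 : Pn t (i + j + 1) = (1 + q ^ (1 + t)) * Pn (t + 1) (i + j) := Pn_succ' _ _
  have hQ2 : Qn l0 t (i + j + 2) =
      (1 + q ^ (l0 + 2 * t + 2)) * (1 + q ^ (l0 + 2 * t + 3)) * Qn l0 (t + 1) (i + j) := Qn_two _ _ _
  have hQ1 : Qn l0 t (i + j + 1) * (1 + q ^ (i + j + 1 + l0 + 2 * t + 2)) =
      (1 + q ^ (l0 + 2 * t + 2)) * (1 + q ^ (l0 + 2 * t + 3)) * Qn l0 (t + 1) (i + j) := by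
    rw [← Qn_succ]
    rw [show i + j + 1 + 1 = i + j + 2 by omega]
    exact Qn_two _ _ _
  have hX2 : Qn l0 (t + 1) (i + j) ≠ 0 := Qn_ne_zero _ _ _
  have n1 := one_add_q_pow_ne_zero (l0 + 2 * t + 2)
  have n2 := one_add_q_pow_ne_zero (l0 + 2 * t + 3)
  have hM : (1 + q ^ (l0 + 2 * t + 2)) * (1 + q ^ (l0 + 2 * t + 3)) * Qn l0 (t + 1) (i + j) ≠ 0 :=
    mul_ne_zero (mul_ne_zero n1 n2) hX2
  have hz2 : zet l0 t (i + j + 2) =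
      q ^ ((l0 + t + 1) * (i + j + 2)) *
        ((1 + q ^ (1 + t)) * (Pn (t + 1) (i + j) * (1 + q ^ (i + j + 1 + (t+1))))) /
        ((1 + q ^ (l0 + 2 * t + 2)) * (1 + q ^ (l0 + 2 * t + 3)) * Qn l0 (t + 1) (i + j)) := by
    rw [zet, hP2, hQ2]
  have hz1 : zet l0 t (i + j + 1) =
      q ^ ((l0 + t + 1) * (i + j + 1)) * ((1 + q ^ (1 + t)) * Pn (t + 1) (i + j)) *
        (1 + q ^ (i + j + 1 + l0 + 2 * t + 2)) /
        ((1 + q ^ (l0 + 2 * t + 2)) * (1 + q ^ (l0 + 2 * t + 3)) * Qn l0 (t + 1) (i + j)) := by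
    rw [zet, hP1, div_eq_div_iff (Qn_ne_zero _ _ _) hM]
    linear_combination (-(q ^ ((l0 + t + 1) * (i + j + 1)) * ((1 + q ^ (1 + t)) * Pn (t + 1) (i + j)))) * hQ1
  rw [hz2, hz1, rh, Rf, Cf, zet]
  rw [div_mul_div_comm, div_mul_div_comm, div_mul_div_comm]
  have n4 := one_add_q_pow_ne_zero (i + l0 + 2 * t + 2)
  have n5 := one_add_q_pow_ne_zero (l0 + 2 * t + 2 + i)
  have n6 := q_pow_ne_zero i
  have n7 := q_pow_ne_zero j
  rw [div_sub_div _ _ hM (mul_ne_zero n4 hM),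
    div_eq_div_iff (mul_ne_zero hM (mul_ne_zero n4 hM))
      (mul_ne_zero (mul_ne_zero (mul_ne_zero (mul_ne_zero n5 (mul_ne_zero n1 n2)) n6) n7) hX2)]
  ring

noncomputable def Cc (l0 n t : ℕ) : RatFunc ℚ :=
  (∏ i ∈ Finset.range n, Rf l0 t i) * ∏ j ∈ Finset.range n, Cf j

noncomputable def Phi (l0 n t : ℕ) : RatFunc ℚ :=
  ∏ s ∈ Finset.range n, Cc l0 (n - s) (t + s)

lemma Phi_succ (l0 n t : ℕ) : Phi l0 (n + 1) t = Cc l0 (n + 1) t * Phi l0 n (t + 1) := by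
  rw [Phi, Finset.prod_range_succ', mul_comm]
  congr 1
  rw [Phi]
  refine Finset.prod_congr rfl fun k hk => ?_
  have h1 : n + 1 - (k + 1) = n - k := by omega
  have h2 : t + (k + 1) = t + 1 + k := by omega
  rw [h1, h2]

lemma master (l0 : ℕ) : ∀ n t : ℕ,
    Matrix.det (Matrix.of fun i j : Fin (n + 1) => zet l0 t ((i : ℕ) + (j : ℕ))) = Phi l0 n t := by
  intro n
  induction n with
  | zero =>
      intro t
      rw [Matrix.det_fin_one]
      simp [Phi, zet_zero]
  | succ n ih =>
    intro t
    set M : Matrix (Fin (n + 2)) (Fin (n + 2)) (RatFunc ℚ) :=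
      Matrix.of fun i j : Fin (n + 2) => zet l0 t ((i : ℕ) + (j : ℕ)) with hM
    set E : Matrix (Fin (n + 2)) (Fin (n + 2)) (RatFunc ℚ) :=
      Matrix.of fun i j : Fin (n + 2) =>
        if (j : ℕ) + 1 = (i : ℕ) then -rh l0 t (j : ℕ) else 0 with hE
    set L : Matrix (Fin (n + 2)) (Fin (n + 2)) (RatFunc ℚ) := 1 + E with hL
    have hLtri : L.BlockTriangular ⇑OrderDual.toDual := by
      intro i j hij
      have hij' : (i : Fin (n+2)) < j := hij
      have h1 : (1 : Matrix (Fin (n + 2)) (Fin (n + 2)) (RatFunc ℚ)) i j = 0 :=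
        Matrix.one_apply_ne (ne_of_lt hij')
      have h2 : E i j = 0 := by
        simp only [hE, Matrix.of_apply]
        rw [if_neg]
        omega
      simp [hL, Matrix.add_apply, h1, h2]
    have hLdiag : ∀ i, L i i = 1 := by
      intro i
      have h2 : E i i = 0 := by
        simp only [hE, Matrix.of_apply]
        rw [if_neg]
        omega
      simp [hL, Matrix.add_apply, h2]
    have hLdet : L.det = 1 := by
      rw [Matrix.det_of_lowerTriangular L hLtri]
      simp [hLdiag]
    have hdetLM : (L * M).det = M.det := by
      rw [Matrix.det_mul, hLdet, one_mul]
    -- entries of E * M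
    have hEM0 : ∀ k : Fin (n + 2), (E * M) 0 k = 0 := by
      intro k
      rw [Matrix.mul_apply]
      refine Finset.sum_eq_zero fun j _ => ?_
      have : E 0 j = 0 := by
        simp only [hE, Matrix.of_apply, Fin.val_zero]
        refine if_neg ?_
        omega
      rw [this, zero_mul]
    have hEMs : ∀ (i : Fin (n + 1)) (k : Fin (n + 2)),
        (E * M) i.succ k = -rh l0 t (i : ℕ) * M (Fin.castSucc i) k := by
      intro i k
      rw [Matrix.mul_apply]
      rw [Finset.sum_eq_single (Fin.castSucc i)]
      · have : E i.succ (Fin.castSucc i) = -rh l0 t (i : ℕ) := by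
          simp [hE, Matrix.of_apply, Fin.coe_castSucc, Fin.val_succ]
        rw [this]
      · intro j _ hj
        have : E i.succ j = 0 := by
          simp only [hE, Matrix.of_apply, Fin.val_succ]
          rw [if_neg]
          intro hc
          apply hj
          apply Fin.ext
          simp only [Fin.coe_castSucc]
          omega
        rw [this, zero_mul]
      · intro h
        exact absurd (Finset.mem_univ _) h
    have hLM : ∀ (i k : Fin (n + 2)), (L * M) i k = M i k + (E * M) i k := by
      intro i k
      rw [hL, add_mul, one_mul, Matrix.add_apply]
    -- column 0 of L * M
    have hcol0 : ∀ i : Fin (n + 2), i ≠ 0 → (L * M) i 0 = 0 := by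
      intro i hi
      obtain ⟨i', rfl⟩ := Fin.eq_succ_of_ne_zero hi
      rw [hLM, hEMs]
      have hMv : M i'.succ 0 = zet l0 t ((i' : ℕ) + 1) := by
        simp [hM, Fin.val_succ]
      have hMv' : M (Fin.castSucc i') 0 = zet l0 t (i' : ℕ) := by
        simp [hM]
      rw [hMv, hMv', zet_succ]
      ring
    have h00 : (L * M) 0 0 = 1 := by
      rw [hLM, hEM0, add_zero]
      simp [hM, zet_zero]
    -- the minor
    have hminor : (L * M).submatrix Fin.succ Fin.succ =
        Matrix.diagonal (fun i : Fin (n + 1) => Rf l0 t (i : ℕ)) *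
          Matrix.of (fun i j : Fin (n + 1) => zet l0 (t + 1) ((i : ℕ) + (j : ℕ))) *
          Matrix.diagonal (fun j : Fin (n + 1) => Cf (j : ℕ)) := by
      ext i j
      rw [Matrix.submatrix_apply, Matrix.mul_diagonal, Matrix.diagonal_mul, hLM, hEMs]
      have hMv : M i.succ j.succ = zet l0 t ((i : ℕ) + (j : ℕ) + 2) := by
        simp only [hM, Matrix.of_apply, Fin.val_succ]
        congr 1
        omega
      have hMv' : M (Fin.castSucc i) j.succ = zet l0 t ((i : ℕ) + (j : ℕ) + 1) := by
        simp only [hM, Matrix.of_apply, Fin.coe_castSucc, Fin.val_succ]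
        rfl
      rw [hMv, hMv', Matrix.of_apply]
      have := core_identity l0 t (i : ℕ) (j : ℕ)
      linear_combination this
    -- expand along column 0
    have hexp : (L * M).det = ((L * M).submatrix Fin.succ Fin.succ).det := by
      rw [Matrix.det_succ_column_zero]
      rw [Finset.sum_eq_single 0]
      · rw [h00, Fin.succAbove_zero]
        simp
      · intro i _ hi
        rw [hcol0 i hi]
        ring
      · intro h
        exact absurd (Finset.mem_univ _) h
    rw [← hdetLM, hexp, hminor, Matrix.det_mul, Matrix.det_mul, Matrix.det_diagonal,
      Matrix.det_diagonal, ih (t + 1), Phi_succ, Cc]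
    rw [Fin.prod_univ_eq_prod_range, Fin.prod_univ_eq_prod_range]
    ring

lemma Cc_succ (l0 m t : ℕ) : Cc l0 (m + 1) t = Cc l0 m t * (Rf l0 t m * Cf m) := by
  rw [Cc, Cc, Finset.prod_range_succ, Finset.prod_range_succ]
  ring

lemma Phi_zero_eq (l0 n : ℕ) : Phi l0 n 0 = ∏ s ∈ Finset.range n, Cc l0 (n - s) s := by
  rw [Phi]
  exact Finset.prod_congr rfl fun s _ => by rw [Nat.zero_add]

lemma Phi_zero_succ (l0 n : ℕ) : Phi l0 (n + 1) 0 =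
    Phi l0 n 0 * ((∏ s ∈ Finset.range n, (Rf l0 s (n - s) * Cf (n - s))) * Cc l0 1 n) := by
  rw [Phi, Finset.prod_range_succ]
  simp only [Nat.zero_add]
  rw [show n + 1 - n = 1 by omega]
  have h2 : ∀ s ∈ Finset.range n,
      Cc l0 (n + 1 - s) s = Cc l0 (n - s) s * (Rf l0 s (n - s) * Cf (n - s)) := by
    intro s hs
    have hs' : s < n := Finset.mem_range.1 hs
    rw [show n + 1 - s = (n - s) + 1 by omega, Cc_succ]
  rw [Finset.prod_congr rfl h2, Finset.prod_mul_distrib, Phi_zero_eq]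
  ring

lemma prod_range_two_mul (m : ℕ) (f : ℕ → RatFunc ℚ) :
    ∏ u ∈ Finset.range (2 * m), f u = ∏ k ∈ Finset.range m, (f (2 * k) * f (2 * k + 1)) := by
  induction m with
  | zero => simp
  | succ m ih =>
      rw [show 2 * (m + 1) = 2 * m + 1 + 1 by omega, Finset.prod_range_succ,
        Finset.prod_range_succ, ih, Finset.prod_range_succ]
      ring

lemma sum_shift (n c : ℕ) : ∑ s ∈ Finset.range n, (s + c) = (∑ s ∈ Finset.range n, s) + n * c := by
  rw [Finset.sum_add_distrib, Finset.sum_const, Finset.card_range, smul_eq_mul]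

lemma ch2 : ∀ m : ℕ, 2 * (m + 1).choose 2 = (m + 1) * m := by
  intro m
  induction m with
  | zero => rfl
  | succ m ih =>
      rw [Nat.choose_succ_succ (m + 1) 1, Nat.choose_one_right, Nat.mul_add, ih]
      ring

set_option maxHeartbeats 4000000 in
lemma Delta (l0 n : ℕ) :
    (∏ s ∈ Finset.range n, (Rf l0 s (n - s) * Cf (n - s))) * Cc l0 1 n =
      (-1 : RatFunc ℚ) ^ (n + 1) * q ^ ((n + 1) * (2 * l0 + n + 3)) *
        (qPoch (q ^ 2) (q ^ 2) (n + 1) * qPoch (q ^ 2) (q ^ (2 * l0 + 2)) (n + 1) /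
          (qPoch (q ^ 2) (-q ^ (l0 + 1)) (n + 1) * qPoch (q ^ 2) (-q ^ (l0 + 2)) (n + 1) *
            qPoch (q ^ 2) (-q ^ (l0 + 2)) (n + 1) * qPoch (q ^ 2) (-q ^ (l0 + 3)) (n + 1))) := by
  -- rewrite each LHS factor
  have hterm : ∀ s ∈ Finset.range n, Rf l0 s (n - s) * Cf (n - s) =
      ((-1 : RatFunc ℚ) * (q ^ (l0 + n + s + 2) * q ^ (l0 + s + 1) *
        ((1 - q ^ (l0 + s + 1)) * (1 + q ^ (s + 1)) * (1 - q ^ (n - s + 1))))) /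
        ((1 + q ^ (l0 + n + s + 2)) * ((1 + q ^ (l0 + 2 * s + 2)) * (1 + q ^ (l0 + 2 * s + 3))) *
          (q ^ (n - s) * q ^ (n - s))) := by
    intro s hs
    have hs' : s < n := Finset.mem_range.1 hs
    rw [Rf, Cf, div_mul_div_comm]
    rw [qpow_congr (show l0 + 2 * s + 2 + (n - s) = l0 + n + s + 2 by omega)]
    rw [qpow_congr (show 1 + s = s + 1 by omega)]
    ring
  rw [Finset.prod_congr rfl hterm, Finset.prod_div_distrib]
  simp only [Finset.prod_mul_distrib]
  rw [Finset.prod_const, Finset.card_range]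
  simp only [Finset.prod_pow_eq_pow_sum]
  -- sums
  have e1 : ∑ s ∈ Finset.range n, (l0 + n + s + 2) =
      (∑ s ∈ Finset.range n, s) + n * (l0 + n + 2) := by
    rw [← sum_shift]
    exact Finset.sum_congr rfl fun s _ => by omega
  have e2 : ∑ s ∈ Finset.range n, (l0 + s + 1) =
      (∑ s ∈ Finset.range n, s) + n * (l0 + 1) := by
    rw [← sum_shift]
    exact Finset.sum_congr rfl fun s _ => by omega
  have e3 : ∑ s ∈ Finset.range n, (n - s) = (∑ s ∈ Finset.range n, s) + n := by
    have h1 : ∑ s ∈ Finset.range n, (n - s) = ∑ s ∈ Finset.range n, (n - 1 - s + 1) :=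
      Finset.sum_congr rfl fun s hs => by
        have := Finset.mem_range.1 hs; omega
    rw [h1, Finset.sum_range_reflect (fun j => j + 1) n, sum_shift, mul_one]
  have e4 : ∏ s ∈ Finset.range n, (1 - q ^ (n - s + 1)) =
      ∏ s ∈ Finset.range n, (1 - q ^ (s + 2)) := by
    have h1 : ∏ s ∈ Finset.range n, (1 - q ^ (n - s + 1)) =
        ∏ s ∈ Finset.range n, (1 - q ^ (n - 1 - s + 2)) :=
      Finset.prod_congr rfl fun s hs => by
        rw [qpow_congr (show n - 1 - s + 2 = n - s + 1 by
          have := Finset.mem_range.1 hs; omega)]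
    rw [h1, Finset.prod_range_reflect (fun j => 1 - q ^ (j + 2)) n]
  rw [e1, e2, e3, e4]
  -- unfold the last factor
  have hCc1 : Cc l0 1 n = (q ^ (l0 + 2 * n + 2) * (1 - q ^ (l0 + n + 1)) *
      (q ^ (l0 + n + 1) * (1 + q ^ (n + 1)))) /
      ((1 + q ^ (l0 + 2 * n + 2)) * ((1 + q ^ (l0 + 2 * n + 2)) * (1 + q ^ (l0 + 2 * n + 3)))) *
      -(1 - q) := by
    rw [Cc, Finset.prod_range_one, Finset.prod_range_one, Rf, Cf]
    rw [qpow_congr (show l0 + 2 * n + 2 + 0 = l0 + 2 * n + 2 by omega),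
      qpow_congr (show 1 + n = n + 1 by omega)]
    norm_num
  rw [hCc1]
  -- RHS pochhammers
  have hD : qPoch (q ^ 2) (q ^ 2) (n + 1) =
      ((∏ s ∈ Finset.range n, (1 - q ^ (s + 2))) * (1 - q)) *
        ((∏ s ∈ Finset.range n, (1 + q ^ (s + 1))) * (1 + q ^ (n + 1))) := by
    have h1 : qPoch (q ^ 2) (q ^ 2) (n + 1) =
        ∏ k ∈ Finset.range (n + 1), ((1 - q ^ (k + 1)) * (1 + q ^ (k + 1))) :=
      Finset.prod_congr rfl fun k _ => by ring
    rw [h1, Finset.prod_mul_distrib, Finset.prod_range_succ' (fun k => 1 - q ^ (k + 1)) n,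
      Finset.prod_range_succ]
    have h2 : ∏ k ∈ Finset.range n, (1 - q ^ (k + 1 + 1)) =
        ∏ s ∈ Finset.range n, (1 - q ^ (s + 2)) :=
      Finset.prod_congr rfl fun k _ => by rw [qpow_congr (show k + 1 + 1 = k + 2 by omega)]
    rw [h2]
    norm_num
  have hE : qPoch (q ^ 2) (q ^ (2 * l0 + 2)) (n + 1) =
      ((∏ s ∈ Finset.range n, (1 - q ^ (l0 + s + 1))) * (1 - q ^ (l0 + n + 1))) *
        (∏ s ∈ Finset.range (n + 1), (1 + q ^ (l0 + s + 1))) := by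
    have h1 : qPoch (q ^ 2) (q ^ (2 * l0 + 2)) (n + 1) =
        ∏ k ∈ Finset.range (n + 1), ((1 - q ^ (l0 + k + 1)) * (1 + q ^ (l0 + k + 1))) :=
      Finset.prod_congr rfl fun k _ => by ring
    rw [h1, Finset.prod_mul_distrib, Finset.prod_range_succ (fun k => 1 - q ^ (l0 + k + 1)) n]
  have hB : qPoch (q ^ 2) (-q ^ (l0 + 2)) (n + 1) =
      (∏ s ∈ Finset.range n, (1 + q ^ (l0 + 2 * s + 2))) * (1 + q ^ (l0 + 2 * n + 2)) := by
    have h1 : qPoch (q ^ 2) (-q ^ (l0 + 2)) (n + 1) =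
        ∏ k ∈ Finset.range (n + 1), (1 + q ^ (l0 + 2 * k + 2)) :=
      Finset.prod_congr rfl fun k _ => by ring
    rw [h1, Finset.prod_range_succ]
  have hC : qPoch (q ^ 2) (-q ^ (l0 + 3)) (n + 1) =
      (∏ s ∈ Finset.range n, (1 + q ^ (l0 + 2 * s + 3))) * (1 + q ^ (l0 + 2 * n + 3)) := by
    have h1 : qPoch (q ^ 2) (-q ^ (l0 + 3)) (n + 1) =
        ∏ k ∈ Finset.range (n + 1), (1 + q ^ (l0 + 2 * k + 3)) :=
      Finset.prod_congr rfl fun k _ => by ring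
    rw [h1, Finset.prod_range_succ]
  have hA : qPoch (q ^ 2) (-q ^ (l0 + 1)) (n + 1) * qPoch (q ^ 2) (-q ^ (l0 + 2)) (n + 1) =
      (∏ s ∈ Finset.range (n + 1), (1 + q ^ (l0 + s + 1))) *
        ((∏ s ∈ Finset.range n, (1 + q ^ (l0 + n + s + 2))) * (1 + q ^ (l0 + 2 * n + 2))) := by
    have h1 : qPoch (q ^ 2) (-q ^ (l0 + 1)) (n + 1) =
        ∏ k ∈ Finset.range (n + 1), (1 + q ^ (l0 + 1 + 2 * k)) :=
      Finset.prod_congr rfl fun k _ => by ring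
    have h2 : qPoch (q ^ 2) (-q ^ (l0 + 2)) (n + 1) =
        ∏ k ∈ Finset.range (n + 1), (1 + q ^ (l0 + 1 + (2 * k + 1))) :=
      Finset.prod_congr rfl fun k _ => by ring
    rw [h1, h2, ← Finset.prod_mul_distrib,
      ← prod_range_two_mul (n + 1) (fun u => 1 + q ^ (l0 + 1 + u)),
      show 2 * (n + 1) = (n + 1) + (n + 1) by omega,
      Finset.prod_range_add (fun u => 1 + q ^ (l0 + 1 + u)) (n + 1) (n + 1),
      Finset.prod_range_succ (fun u => 1 + q ^ (l0 + 1 + (n + 1 + u))) n]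
    congr 1
    · exact Finset.prod_congr rfl fun s _ => by
        rw [qpow_congr (show l0 + 1 + s = l0 + s + 1 by omega)]
    congr 1
    · exact Finset.prod_congr rfl fun s _ => by
        rw [qpow_congr (show l0 + 1 + (n + 1 + s) = l0 + n + s + 2 by omega)]
    · rw [qpow_congr (show l0 + 1 + (n + 1 + n) = l0 + 2 * n + 2 by omega)]
  rw [hD, hE]
  rw [show qPoch (q ^ 2) (-q ^ (l0 + 1)) (n + 1) * qPoch (q ^ 2) (-q ^ (l0 + 2)) (n + 1) *
        qPoch (q ^ 2) (-q ^ (l0 + 2)) (n + 1) * qPoch (q ^ 2) (-q ^ (l0 + 3)) (n + 1) =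
      qPoch (q ^ 2) (-q ^ (l0 + 1)) (n + 1) * qPoch (q ^ 2) (-q ^ (l0 + 2)) (n + 1) *
        (qPoch (q ^ 2) (-q ^ (l0 + 2)) (n + 1) * qPoch (q ^ 2) (-q ^ (l0 + 3)) (n + 1)) by ring,
    hA, hB, hC]
  -- now everything is explicit; clear denominators
  have hP4 : (∏ s ∈ Finset.range (n + 1), (1 + q ^ (l0 + s + 1))) ≠ 0 :=
    Finset.prod_ne_zero_iff.2 fun s _ => one_add_q_pow_ne_zero _
  have hP5 : (∏ s ∈ Finset.range n, (1 + q ^ (l0 + n + s + 2))) ≠ 0 :=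
    Finset.prod_ne_zero_iff.2 fun s _ => one_add_q_pow_ne_zero _
  have hP6 : (∏ s ∈ Finset.range n, (1 + q ^ (l0 + 2 * s + 2))) ≠ 0 :=
    Finset.prod_ne_zero_iff.2 fun s _ => one_add_q_pow_ne_zero _
  have hP7 : (∏ s ∈ Finset.range n, (1 + q ^ (l0 + 2 * s + 3))) ≠ 0 :=
    Finset.prod_ne_zero_iff.2 fun s _ => one_add_q_pow_ne_zero _
  have n1 := one_add_q_pow_ne_zero (l0 + 2 * n + 2)
  have n2 := one_add_q_pow_ne_zero (l0 + 2 * n + 3)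
  have n3 := q_pow_ne_zero ((∑ s ∈ Finset.range n, s) + n)
  simp only [div_mul_eq_mul_div, div_div, ← mul_div_assoc]
  refine (div_eq_div_iff ?_ ?_).mpr ?_
  · repeat' apply mul_ne_zero
    all_goals first
      | exact hP4 | exact hP5 | exact hP6 | exact hP7
      | exact q_pow_ne_zero _ | exact one_add_q_pow_ne_zero _
  · repeat' apply mul_ne_zero
    all_goals first
      | exact hP4 | exact hP5 | exact hP6 | exact hP7
      | exact q_pow_ne_zero _ | exact one_add_q_pow_ne_zero _
  · ring

lemma Phi_zero (l0 : ℕ) : ∀ n : ℕ, Phi l0 n 0 =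
    (-1) ^ ((n + 1).choose 2) *
        q ^ (2 * (n + 2).choose 3 + (2 * l0 + 1) * (n + 1).choose 2) *
      ∏ k ∈ Finset.Icc 1 n,
        qPoch (q ^ 2) (q ^ 2) k * qPoch (q ^ 2) (q ^ (2 * l0 + 2)) k /
          (qPoch (q ^ 2) (-q ^ (l0 + 1)) k * qPoch (q ^ 2) (-q ^ (l0 + 2)) k *
            qPoch (q ^ 2) (-q ^ (l0 + 2)) k * qPoch (q ^ 2) (-q ^ (l0 + 3)) k) := by
  intro n
  induction n with
  | zero => simp [Phi]
  | succ n ih =>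
      rw [Phi_zero_succ, ih, Delta]
      rw [Finset.prod_Icc_succ_top (by omega : 1 ≤ n + 1)]
      have c2 : (n + 2).choose 2 = (n + 1).choose 2 + (n + 1) := by
        rw [Nat.choose_succ_succ (n + 1) 1, Nat.choose_one_right,
          (rfl : (n + 1).choose (Nat.succ 1) = (n + 1).choose 2)]
        omega
      have c3 : (n + 3).choose 3 = (n + 2).choose 3 + (n + 2).choose 2 := by
        rw [Nat.choose_succ_succ (n + 2) 2,
          (rfl : (n + 2).choose (Nat.succ 2) = (n + 2).choose 3)]
        omega
      have hc2 : 2 * (n + 1).choose 2 = (n + 1) * n := ch2 n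
      have hE : 2 * (n + 3).choose 3 + (2 * l0 + 1) * (n + 2).choose 2 =
          (2 * (n + 2).choose 3 + (2 * l0 + 1) * (n + 1).choose 2) + (n + 1) * (2 * l0 + n + 3) := by
        rw [c3, c2]
        zify at hc2 ⊢
        linear_combination hc2
      rw [show n + 1 + 2 = n + 3 by omega, show n + 1 + 1 = n + 2 by omega, hE, c2, pow_add, pow_add]
      ring

lemma xiSeq_eq_zet (ℓ m : ℕ) : xiSeq ℓ m = zet ℓ 0 m := by
  rw [xiSeq, zet, show ℓ + 0 + 1 = ℓ + 1 by omega]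
  have h1 : qPoch q (-q) m = Pn 0 m := by
    rw [qPoch, Pn]
    exact Finset.prod_congr rfl fun j _ => by ring
  have h2 : qPoch q (-q ^ (ℓ + 2)) m = Qn ℓ 0 m := by
    rw [qPoch, Qn]
    exact Finset.prod_congr rfl fun j _ => by ring
  rw [h1, h2]

theorem hankel_xi (ℓ : ℕ) :
    ∀ n : ℕ,
      Matrix.det (Matrix.of fun i j : Fin (n + 1) => xiSeq ℓ ((i : ℕ) + (j : ℕ))) =
        (-1) ^ ((n + 1).choose 2) *
            q ^ (2 * (n + 2).choose 3 + (2 * ℓ + 1) * (n + 1).choose 2) *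
          ∏ k ∈ Finset.Icc 1 n,
            qPoch (q ^ 2) (q ^ 2) k * qPoch (q ^ 2) (q ^ (2 * ℓ + 2)) k /
              (qPoch (q ^ 2) (-q ^ (ℓ + 1)) k * qPoch (q ^ 2) (-q ^ (ℓ + 2)) k *
                qPoch (q ^ 2) (-q ^ (ℓ + 2)) k * qPoch (q ^ 2) (-q ^ (ℓ + 3)) k) := by
  intro n
  have hmat : (Matrix.of fun i j : Fin (n + 1) => xiSeq ℓ ((i : ℕ) + (j : ℕ))) =
      Matrix.of fun i j : Fin (n + 1) => zet ℓ 0 ((i : ℕ) + (j : ℕ)) := by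
    ext i j
    simp only [Matrix.of_apply]
    exact xiSeq_eq_zet ℓ _
  rw [hmat, master ℓ n 0, Phi_zero]
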